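/- arXiv:1410.7181 — 2 statements merged into one kernel-verified Lean document; each statement's English description precedes it below -/
import Mathlib

section
/- Let f_n ∈ SL(2,ℝ) with lower-left entries c_n ≠ 0 and f_n → Id entrywise. Then for every α > 0, the matrix [[α,0],[0,α⁻¹]] is a limit of matrices of the form u'_n f_n u''_n with u'_n, u''_n in the upper unipotent subgroup U. -/
open Filter Topology

/-- If `f_n = [[a_n,b_n],[c_n,d_n]] ∈ SL(2,ℝ)` has `c_n ≠ 0` and `f_n → Id`
entrywise, then for every `α > 0` the matrix `diag(α,α⁻¹)` is a limit of matrices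
`u'_n f_n u''_n` with `u'_n, u''_n` upper unipotent. -/
theorem stmt_5 (a b c d : ℕ → ℝ) (hdet : ∀ n, a n * d n - b n * c n = 1)
    (hc : ∀ n, c n ≠ 0)
    (hf : Tendsto (fun n => !![a n, b n; c n, d n]) atTop
      (𝓝 (1 : Matrix (Fin 2) (Fin 2) ℝ)))
    (α : ℝ) (hα : 0 < α) :
    ∃ s s' : ℕ → ℝ,
      Tendsto (fun n => !![1, s n; 0, 1] * !![a n, b n; c n, d n] * !![1, s' n; 0, 1])
        atTop (𝓝 !![α, 0; 0, α⁻¹]) := by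
  refine ⟨fun n => (α - a n) / c n,
    fun n => -(b n + d n * ((α - a n) / c n)) / α, ?_⟩
  have hα0 : α ≠ 0 := ne_of_gt hα
  have hc0 : Tendsto c atTop (𝓝 0) := by
    have h := (((continuous_apply (0 : Fin 2)).comp
      (continuous_apply (1 : Fin 2))).tendsto _).comp hf
    exact h
  have key : (fun n => !![1, (α - a n) / c n; 0, 1] * !![a n, b n; c n, d n] *
      !![1, -(b n + d n * ((α - a n) / c n)) / α; 0, 1])
      = fun n => !![α, 0; c n, α⁻¹] := by
    funext n
    have hd := hdet n
    have hcn := hc n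
    rw [Matrix.mul_fin_two, Matrix.mul_fin_two]
    ext i j
    fin_cases i <;> fin_cases j <;> simp <;> field_simp <;> ring_nf <;>
      first
      | nlinarith [hdet n, sq_nonneg (c n)]
      | exact Or.inl (by linear_combination c n * hdet n)
  rw [key]
  have hcont : Continuous fun t : ℝ => !![α, 0; t, α⁻¹] := by
    apply continuous_matrix
    intro i j
    fin_cases i <;> fin_cases j <;> simp <;>
      first | exact continuous_const | exact continuous_id
  have := (hcont.tendsto 0).comp hc0
  simpa [Function.comp_def] using this
end

section
/- Let Γ be a discrete subgroup of PSL(2,ℝ) × G (G a topological group) such that the quotient Γ\(PSL(2,ℝ) × G) is compact. Then Γ contains no semi-parabolic element, i.e., no element (f,g) with f conjugate in PSL(2,ℝ) to a nontrivial upper unipotent matrix. -/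
open scoped MatrixGroups
open Filter Topology

instance : TopologicalSpace SL(2, ℝ) := instTopologicalSpaceSubtype

/-- The upper unipotent matrix `[[1,t],[0,1]]` in `SL(2,ℝ)`. -/
def uni (t : ℝ) : SL(2, ℝ) := ⟨!![1, t; 0, 1], by simp [Matrix.det_fin_two_of]⟩

noncomputable instance : IsTopologicalGroup SL(2,ℝ) where
  continuous_mul := continuous_induced_rng.mpr <|
    (continuous_subtype_val.comp continuous_fst).mul (continuous_subtype_val.comp continuous_snd)
  continuous_inv := continuous_induced_rng.mpr <| by
    exact continuous_subtype_val.matrix_adjugate.congr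
      (fun A => (Matrix.SpecialLinearGroup.coe_inv A).symm)

instance : T2Space SL(2,ℝ) := Topology.IsEmbedding.t2Space ⟨⟨rfl⟩, Subtype.val_injective⟩

instance auxCCS {G : Type*} [Group G] [TopologicalSpace G] [IsTopologicalGroup G]
    (Γ : Subgroup (SL(2,ℝ) × G)) : ContinuousConstSMul Γ (SL(2,ℝ) × G) :=
  ⟨fun γ => by
    simpa [Subgroup.smul_def, smul_eq_mul] using
      (continuous_const.fun_mul continuous_id :
        Continuous fun x : SL(2,ℝ) × G => (γ : SL(2,ℝ) × G) * x)⟩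

lemma uni_continuous : Continuous uni := by
  apply continuous_induced_rng.mpr
  apply continuous_matrix
  intro i j
  fin_cases i <;> fin_cases j <;>
    simp only [uni, Function.comp_def, Matrix.cons_val_zero, Matrix.cons_val_one,
      Matrix.head_cons, Matrix.head_fin_const, Fin.isValue, Matrix.cons_val',
      Matrix.cons_val_fin_one, Matrix.empty_val'] <;>
    first
      | exact continuous_const
      | exact continuous_id
      | continuity

lemma uni_zero : uni 0 = 1 := by
  apply Subtype.ext
  simp [uni, Matrix.one_fin_two]

lemma uni_eq_one_iff (t : ℝ) : uni t = 1 ↔ t = 0 := by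
  constructor
  · intro h
    have := congrArg (fun A : SL(2,ℝ) => (A : Matrix (Fin 2) (Fin 2) ℝ) 0 1) h
    simpa [uni, Matrix.one_fin_two] using this
  · rintro rfl; exact uni_zero

/-- the diagonal element diag(n+1, (n+1)⁻¹) -/
noncomputable def dg (n : ℕ) : SL(2,ℝ) :=
  ⟨!![(n:ℝ)+1, 0; 0, ((n:ℝ)+1)⁻¹], by
    have h : ((n:ℝ)+1) ≠ 0 := by positivity
    simp [Matrix.det_fin_two_of, h]⟩

set_option linter.unnecessarySeqFocus false in
lemma dg_conj (n : ℕ) (t : ℝ) :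
    (dg n)⁻¹ * uni t * dg n = uni (t / ((n:ℝ)+1)^2) := by
  have h : ((n:ℝ)+1) ≠ 0 := by positivity
  have key : uni t * dg n = dg n * uni (t / ((n:ℝ)+1)^2) := by
    apply Subtype.ext
    simp only [Matrix.SpecialLinearGroup.coe_mul]
    simp only [uni, dg, Matrix.mul_fin_two]
    ext i j
    fin_cases i <;> fin_cases j <;> simp <;> field_simp <;> ring
  calc (dg n)⁻¹ * uni t * dg n = (dg n)⁻¹ * (uni t * dg n) := by group
    _ = (dg n)⁻¹ * (dg n * uni (t / ((n:ℝ)+1)^2)) := by rw [key]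
    _ = uni (t / ((n:ℝ)+1)^2) := by group

lemma tendsto_uni (t : ℝ) :
    Tendsto (fun n : ℕ => uni (t / ((n:ℝ)+1)^2)) atTop (𝓝 1) := by
  have h2 : Tendsto (fun n : ℕ => ((n:ℝ)+1)^2) atTop atTop := by
    have hb : Tendsto (fun n : ℕ => ((n:ℝ)+1)) atTop atTop :=
      tendsto_atTop_add_const_right _ 1 tendsto_natCast_atTop_atTop
    simpa [pow_two] using hb.atTop_mul_atTop₀ hb
  have hs : Tendsto (fun n : ℕ => t / ((n:ℝ)+1)^2) atTop (𝓝 0) :=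
    Tendsto.div_atTop tendsto_const_nhds h2
  have := (uni_continuous.tendsto 0).comp hs
  rwa [uni_zero] at this

set_option maxHeartbeats 1000000 in
/-- main auxiliary lemma -/
lemma aux_main {G : Type*} [Group G] [TopologicalSpace G] [IsTopologicalGroup G]
    (Γ : Subgroup (SL(2, ℝ) × G)) (hdisc : DiscreteTopology Γ)
    (hcpt : CompactSpace (Quotient (MulAction.orbitRel Γ (SL(2, ℝ) × G))))
    (γ : SL(2,ℝ) × G) (hγΓ : γ ∈ Γ) (h : SL(2,ℝ)) (t : ℝ)
    (ζ : SL(2,ℝ)) (hζ : ∀ a : SL(2,ℝ), a * ζ = ζ * a)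
    (hγ1 : γ.1 = ζ * (h * uni t * h⁻¹)) :
    h * uni t * h⁻¹ = 1 := by
  classical
  set q : (SL(2,ℝ) × G) → Quotient (MulAction.orbitRel (↥Γ) (SL(2, ℝ) × G)) :=
    Quotient.mk (MulAction.orbitRel (↥Γ) (SL(2, ℝ) × G)) with hq
  -- the moving basepoints
  set x : ℕ → SL(2,ℝ) × G := fun n => (h * dg n, 1) with hx
  set c : ℕ → SL(2,ℝ) × G := fun n => (x n)⁻¹ * γ * (x n) with hcdef
  have e1 : h⁻¹ * γ.1 * h = ζ * uni t := by
    rw [hγ1]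
    calc h⁻¹ * (ζ * (h * uni t * h⁻¹)) * h
        = (h⁻¹ * ζ) * ((h * uni t * h⁻¹) * h) := by group
      _ = (ζ * h⁻¹) * ((h * uni t * h⁻¹) * h) := by rw [hζ h⁻¹]
      _ = ζ * uni t := by group
  have hc : ∀ n, c n = (ζ * uni (t / ((n:ℝ)+1)^2), γ.2) := by
    intro n
    have hfst : (c n).1 = (h * dg n)⁻¹ * γ.1 * (h * dg n) := by
      rw [hcdef, hx]
      simp [Prod.fst_mul, Prod.fst_inv]
    have hsnd : (c n).2 = γ.2 := by
      rw [hcdef, hx]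
      simp [Prod.snd_mul, Prod.snd_inv]
    have hfst' : (h * dg n)⁻¹ * γ.1 * (h * dg n) = ζ * uni (t / ((n:ℝ)+1)^2) := by
      calc (h * dg n)⁻¹ * γ.1 * (h * dg n)
          = (dg n)⁻¹ * (h⁻¹ * γ.1 * h) * dg n := by group
        _ = (dg n)⁻¹ * (ζ * uni t) * dg n := by rw [e1]
        _ = ((dg n)⁻¹ * ζ) * (uni t * dg n) := by group
        _ = (ζ * (dg n)⁻¹) * (uni t * dg n) := by rw [hζ (dg n)⁻¹]
        _ = ζ * ((dg n)⁻¹ * uni t * dg n) := by group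
        _ = ζ * uni (t / ((n:ℝ)+1)^2) := by rw [dg_conj]
    exact Prod.ext (by rw [hfst, hfst']) hsnd
  set l : SL(2,ℝ) × G := (ζ, γ.2) with hl
  have hlim : Tendsto c atTop (𝓝 l) := by
    have h1 : Tendsto (fun n : ℕ => ζ * uni (t / ((n:ℝ)+1)^2)) atTop (𝓝 ζ) := by
      have := (tendsto_const_nhds : Tendsto (fun _ : ℕ => ζ) atTop (𝓝 ζ)).mul (tendsto_uni t)
      simpa using this
    have h2 := h1.prodMk_nhds (tendsto_const_nhds : Tendsto (fun _ : ℕ => γ.2) atTop (𝓝 γ.2))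
    rw [hl]
    convert h2 using 2 with n
    exact hc n
  -- cluster point from compactness
  obtain ⟨cq, hcq⟩ := exists_clusterPt_of_compactSpace (map (fun n => q (x n)) atTop)
  obtain ⟨y, rfl⟩ := Quotient.exists_rep cq
  set p : SL(2,ℝ) × G := y * l * y⁻¹ with hp
  have hoqm : IsOpenQuotientMap q := MulAction.isOpenQuotientMap_quotientMk
  -- Claim A
  have claimA : ∀ O ∈ 𝓝 p, ∃ δ ∈ O, δ ∈ Γ ∧
      ∃ g' : Γ, δ = (g' : SL(2,ℝ) × G) * γ * (g' : SL(2,ℝ) × G)⁻¹ := by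
    intro O hO
    have hφc : Continuous (fun zw : (SL(2,ℝ)×G) × (SL(2,ℝ)×G) => zw.1 * zw.2 * zw.1⁻¹) :=
      (continuous_fst.mul continuous_snd).mul continuous_fst.inv
    have hpre : (fun zw : (SL(2,ℝ)×G) × (SL(2,ℝ)×G) => zw.1 * zw.2 * zw.1⁻¹) ⁻¹' O
        ∈ 𝓝 (y, l) :=
      hφc.continuousAt.preimage_mem_nhds (by rwa [hp] at hO)
    rw [nhds_prod_eq] at hpre
    obtain ⟨Z, hZ, M, hM, hZM⟩ := Filter.mem_prod_iff.mp hpre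
    obtain ⟨Z', hZ'Z, hZ'o, hyZ'⟩ := mem_nhds_iff.mp hZ
    have hopen : IsOpen (q '' Z') := hoqm.isOpenMap Z' hZ'o
    have hmem : q y ∈ q '' Z' := ⟨y, hyZ', rfl⟩
    have hfreq : ∃ᶠ n in atTop, q (x n) ∈ q '' Z' := by
      have hmcp : MapClusterPt (q y) atTop (fun n => q (x n)) := hcq
      exact (mapClusterPt_iff_frequently.mp hmcp) _ (hopen.mem_nhds hmem)
    have hev : ∀ᶠ n in atTop, c n ∈ M := hlim hM
    obtain ⟨n, ⟨z, hzZ', hz⟩, hcn⟩ := (hfreq.and_eventually hev).exists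
    have hz' : z ∈ MulAction.orbit (↥Γ) (x n) :=
      MulAction.orbitRel_apply.mp (Quotient.exact hz)
    obtain ⟨g', hg'⟩ := MulAction.mem_orbit_iff.mp hz'
    have hzval : z = (g' : SL(2,ℝ) × G) * x n := by
      rw [← hg', Subgroup.smul_def, smul_eq_mul]
    refine ⟨z * c n * z⁻¹, ?_, ?_, g', ?_⟩
    · simpa only [Set.mem_preimage] using hZM (Set.mk_mem_prod (hZ'Z hzZ') hcn)
    · have heq : z * c n * z⁻¹ = (g' : SL(2,ℝ) × G) * γ * (g' : SL(2,ℝ) × G)⁻¹ := by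
        rw [hzval, hcdef]; group
      rw [heq]
      exact mul_mem (mul_mem g'.2 hγΓ) (inv_mem g'.2)
    · rw [hzval, hcdef]; group
  -- discreteness: a neighborhood of 1 meeting Γ only in 1
  obtain ⟨V, hVo, hV1, hVΓ⟩ : ∃ V : Set (SL(2,ℝ) × G), IsOpen V ∧
      (1:SL(2,ℝ)×G) ∈ V ∧ ∀ g ∈ Γ, g ∈ V → g = 1 := by
    have hsingleton : IsOpen ({1} : Set Γ) := isOpen_discrete _
    obtain ⟨U, hUo, hU⟩ := isOpen_induced_iff.mp hsingleton
    refine ⟨U, hUo, ?_, ?_⟩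
    · have h1 : (1:Γ) ∈ (Subtype.val ⁻¹' U : Set Γ) := by rw [hU]; rfl
      exact h1
    · intro g hgΓ hgU
      have hmem : (⟨g, hgΓ⟩ : Γ) ∈ (Subtype.val ⁻¹' U : Set Γ) := hgU
      rw [hU] at hmem
      simpa [Subtype.ext_iff] using hmem
  -- W with W⁻¹ * W ⊆ V
  obtain ⟨W, hW, hWV⟩ : ∃ W : Set (SL(2,ℝ) × G), W ∈ 𝓝 (1 : SL(2,ℝ)×G) ∧
      ∀ a ∈ W, ∀ b ∈ W, a⁻¹ * b ∈ V := by
    have hf : Continuous (fun ab : (SL(2,ℝ)×G) × (SL(2,ℝ)×G) => ab.1⁻¹ * ab.2) :=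
      continuous_fst.inv.mul continuous_snd
    have hpre : (fun ab : (SL(2,ℝ)×G) × (SL(2,ℝ)×G) => ab.1⁻¹ * ab.2) ⁻¹' V
        ∈ 𝓝 ((1:SL(2,ℝ)×G), (1:SL(2,ℝ)×G)) :=
      hf.continuousAt.preimage_mem_nhds (by simpa using hVo.mem_nhds hV1)
    rw [nhds_prod_eq] at hpre
    obtain ⟨W₁, hW₁, W₂, hW₂, hW12⟩ := Filter.mem_prod_iff.mp hpre
    refine ⟨W₁ ∩ W₂, Filter.inter_mem hW₁ hW₂, fun a ha b hb => ?_⟩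
    simpa only [Set.mem_preimage] using hW12 (Set.mk_mem_prod ha.1 hb.2)
  -- the neighborhood p * W of p
  set PW : Set (SL(2,ℝ)×G) := (fun u => p⁻¹ * u) ⁻¹' W with hPW
  have hPWnhds : PW ∈ 𝓝 p := by
    have htd : Tendsto (fun u : SL(2,ℝ)×G => p⁻¹ * u) (𝓝 p) (𝓝 1) := by
      have hcont := (continuous_const.fun_mul continuous_id :
        Continuous fun u : SL(2,ℝ)×G => p⁻¹ * u).tendsto p
      simpa using hcont
    exact htd hW
  -- uniqueness in PW
  have huniq : ∀ δ₁ ∈ Γ, δ₁ ∈ PW → ∀ δ₂ ∈ Γ, δ₂ ∈ PW → δ₁ = δ₂ := by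
    intro δ₁ h₁Γ h₁P δ₂ h₂Γ h₂P
    have hmem : δ₁⁻¹ * δ₂ ∈ V := by
      have hw := hWV _ (Set.mem_preimage.mp h₁P) _ (Set.mem_preimage.mp h₂P)
      have : (p⁻¹ * δ₁)⁻¹ * (p⁻¹ * δ₂) = δ₁⁻¹ * δ₂ := by group
      rwa [this] at hw
    have h1 : δ₁⁻¹ * δ₂ = 1 := hVΓ _ (mul_mem (inv_mem h₁Γ) h₂Γ) hmem
    exact (inv_mul_eq_one.mp h1)
  obtain ⟨δ0, hδ0PW, hδ0Γ, g0, hδ0eq⟩ := claimA PW hPWnhds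
  -- δ0 belongs to every neighborhood of p
  have hall : ∀ O ∈ 𝓝 p, δ0 ∈ O := by
    intro O hO
    obtain ⟨δ, hδO, hδΓ, _, _⟩ := claimA (O ∩ PW) (Filter.inter_mem hO hPWnhds)
    have heq : δ = δ0 := huniq δ hδΓ hδO.2 δ0 hδ0Γ hδ0PW
    rw [← heq]; exact hδO.1
  -- first components: p.1 = δ0.1 by T1
  have hfst : p.1 = δ0.1 := by
    have hcl : p.1 ∈ closure ({δ0.1} : Set SL(2,ℝ)) := by
      rw [mem_closure_iff]
      intro O hOo hpO
      have hin : δ0 ∈ O ×ˢ (Set.univ : Set G) :=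
        hall _ ((hOo.prod isOpen_univ).mem_nhds ⟨hpO, trivial⟩)
      exact ⟨δ0.1, hin.1, rfl⟩
    simpa [closure_singleton] using hcl
  -- compute p.1 and δ0.1
  have hp1 : p.1 = ζ := by
    have : p.1 = y.1 * l.1 * y.1⁻¹ := rfl
    rw [this]
    have : l.1 = ζ := rfl
    rw [this, hζ y.1]
    group
  have hδ01 : δ0.1 = (g0 : SL(2,ℝ)×G).1 * γ.1 * ((g0 : SL(2,ℝ)×G).1)⁻¹ := by
    rw [hδ0eq]; rfl
  -- conclude
  have hkey : (g0 : SL(2,ℝ)×G).1 * γ.1 * ((g0 : SL(2,ℝ)×G).1)⁻¹ = ζ := by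
    rw [← hδ01, ← hfst, hp1]
  set a := (g0 : SL(2,ℝ)×G).1 with ha
  have h2 : a * (ζ * (h * uni t * h⁻¹)) * a⁻¹ = ζ := by rw [← hγ1]; exact hkey
  have h3 : ζ * (a * (h * uni t * h⁻¹) * a⁻¹) = ζ * 1 := by
    rw [mul_one]
    calc ζ * (a * (h * uni t * h⁻¹) * a⁻¹)
        = (ζ * a) * ((h * uni t * h⁻¹) * a⁻¹) := by group
      _ = (a * ζ) * ((h * uni t * h⁻¹) * a⁻¹) := by rw [hζ a]
      _ = a * (ζ * (h * uni t * h⁻¹)) * a⁻¹ := by group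
      _ = ζ := h2
  have h4 : a * (h * uni t * h⁻¹) * a⁻¹ = 1 := mul_left_cancel h3
  have h5 : h * uni t * h⁻¹ = a⁻¹ * (a * (h * uni t * h⁻¹) * a⁻¹) * a := by group
  rw [h5, h4]
  group

/-- Let `Γ` be a discrete subgroup of `PSL(2,ℝ) × G` (here represented
by matrices of `SL(2,ℝ)` up to sign) with compact quotient `Γ\(PSL(2,ℝ) × G)`. Then `Γ`
contains no semi-parabolic element, i.e. no element `(f,g)` with `f` conjugate in
`PSL(2,ℝ)` to a nontrivial upper unipotent element. -/
theorem stmt_11 (G : Type*) [Group G] [TopologicalSpace G] [IsTopologicalGroup G]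
    (Γ : Subgroup (SL(2, ℝ) × G)) (hdisc : DiscreteTopology Γ)
    (hcpt : CompactSpace (Quotient (MulAction.orbitRel Γ (SL(2, ℝ) × G)))) :
    ¬ ∃ γ ∈ Γ, ∃ (h : SL(2, ℝ)) (t : ℝ), t ≠ 0 ∧
      ((γ.1 : Matrix (Fin 2) (Fin 2) ℝ)
          = ((h * uni t * h⁻¹ : SL(2, ℝ)) : Matrix (Fin 2) (Fin 2) ℝ) ∨
        (γ.1 : Matrix (Fin 2) (Fin 2) ℝ)
          = -((h * uni t * h⁻¹ : SL(2, ℝ)) : Matrix (Fin 2) (Fin 2) ℝ)) := by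
  rintro ⟨γ, hγΓ, h, t, ht, hcase⟩
  have hw1 : h * uni t * h⁻¹ = 1 := by
    rcases hcase with hc | hc
    · refine aux_main Γ hdisc hcpt γ hγΓ h t 1 (fun a => by group) ?_
      rw [one_mul]
      exact Subtype.ext hc
    · refine aux_main Γ hdisc hcpt γ hγΓ h t (-1) ?_ ?_
      · intro a
        apply Subtype.ext
        simp
      · apply Subtype.ext
        rw [Matrix.SpecialLinearGroup.coe_mul, Matrix.SpecialLinearGroup.coe_neg,
          Matrix.SpecialLinearGroup.coe_one, neg_one_mul, hc]
  have huni : uni t = 1 := by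
    have hconj : uni t = h⁻¹ * (h * uni t * h⁻¹) * h := by group
    rw [hw1] at hconj
    rw [hconj]; group
  exact ht ((uni_eq_one_iff t).mp huni)
end
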